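/- Let d ≥ 1 and let Γ ⊆ ℕ^{1+d} be an admissible graded subsemigroup. For each integer k ≥ 1, let Γ^k ⊆ ℕ^{1+d} be a graded subsemigroup whose graded pieces Γ^k_r = {α ∈ ℕ^d : (r,α) ∈ Γ^k} satisfy Γ^k_1 = Γ_k and Γ^k_r ⊆ Γ_{kr} for all r ≥ 1. Then k^{-d}·vol(Δ(Γ^k)) converges to vol(Δ(Γ)) as k → ∞. -/

import Mathlib

open scoped BigOperators
open Filter MeasureTheory
open scoped Pointwise

/-- Points of `ℕ^{1+d}`, written as a degree together with a vector in `ℕ^d`. -/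
abbrev NPt (d : ℕ) := ℕ × (Fin d → ℕ)

/-- A subset of `ℕ^{1+d}` is a (graded) subsemigroup if it is closed under addition. -/
def IsGradedSubsemigroup {d : ℕ} (Γ : Set (NPt d)) : Prop :=
  ∀ x ∈ Γ, ∀ y ∈ Γ, x + y ∈ Γ

/-- Linear growth: there is `C > 0` with `|α|₁ ≤ C·m` for all `(m, α) ∈ Γ`. -/
def HasLinearGrowth {d : ℕ} (Γ : Set (NPt d)) : Prop :=
  ∃ C : ℝ, 0 < C ∧ ∀ p ∈ Γ, (∑ i, (p.2 i : ℝ)) ≤ C * p.1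

/-- The canonical embedding `ℕ^{1+d} → ℤ^{1+d}`. -/
def nptToInt {d : ℕ} (p : NPt d) : ℤ × (Fin d → ℤ) :=
  ((p.1 : ℤ), fun i => (p.2 i : ℤ))

/-- `Γ` generates `ℤ^{1+d}` as a group. -/
def GeneratesFullLattice {d : ℕ} (Γ : Set (NPt d)) : Prop :=
  AddSubgroup.closure (nptToInt '' Γ) = ⊤

/-- An admissible graded subsemigroup of `ℕ^{1+d}`. -/
def IsAdmissible {d : ℕ} (Γ : Set (NPt d)) : Prop :=
  IsGradedSubsemigroup Γ ∧ HasLinearGrowth Γ ∧ GeneratesFullLattice Γ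

/-- The canonical embedding `ℕ^{1+d} → ℝ^{1+d}`. -/
def nptToReal {d : ℕ} (p : NPt d) : ℝ × (Fin d → ℝ) :=
  ((p.1 : ℝ), fun i => (p.2 i : ℝ))

/-- The convex cone generated by a subset `S` of a real vector space: the set of finite
nonnegative linear combinations of elements of `S`. -/
def coneGen {E : Type*} [AddCommMonoid E] [Module ℝ E] (S : Set E) : Set E :=
  {y | ∃ (n : ℕ) (c : Fin n → ℝ) (p : Fin n → E),
    (∀ i, 0 ≤ c i) ∧ (∀ i, p i ∈ S) ∧ y = ∑ i, c i • p i}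

/-- The Okounkov body of a subset `Σ ⊆ ℕ^{1+d}`: the slice at height `1` of the closed convex
cone generated by `Σ` in `ℝ^{1+d}`. -/
def okounkovBody {d : ℕ} (S : Set (NPt d)) : Set (Fin d → ℝ) :=
  {x | ((1 : ℝ), x) ∈ closure (coneGen (nptToReal '' S))}

/-- The graded piece `Γ_m` of `Γ ⊆ ℕ^{1+d}`. -/
def gradedPiece {d : ℕ} (Γ : Set (NPt d)) (m : ℕ) : Set (Fin d → ℕ) :=
  {α | (m, α) ∈ Γ}

/-- The superlevel semigroup `Γ^{Φ,≥t}` of a function `Φ` on `Γ`. -/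
def superlevel {d : ℕ} (Γ : Set (NPt d)) (Φ : NPt d → ℝ) (t : ℝ) : Set (NPt d) :=
  {p ∈ Γ | p.1 * t ≤ Φ p}

/-- `θ = limsup_{n → ∞} sup_{α ∈ Γ_n} Φ(n,α)/n`. -/
noncomputable def thetaSup {d : ℕ} (Γ : Set (NPt d)) (Φ : NPt d → ℝ) : ℝ :=
  Filter.limsup (fun n : ℕ => sSup {r | ∃ α, (n, α) ∈ Γ ∧ r = Φ (n, α) / n}) Filter.atTop



namespace OkAux

variable {V : Type*} [AddCommMonoid V] [Module ℝ V]

theorem zero_mem_coneGen (S : Set V) : 0 ∈ coneGen S :=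
  ⟨0, Fin.elim0, Fin.elim0, fun i => i.elim0, fun i => i.elim0, by simp⟩

theorem smul_mem_coneGen {S : Set V} {c : ℝ} (hc : 0 ≤ c) {x : V} (hx : x ∈ coneGen S) :
    c • x ∈ coneGen S := by
  obtain ⟨n, a, p, ha, hp, rfl⟩ := hx
  exact ⟨n, fun i => c * a i, p, fun i => mul_nonneg hc (ha i), hp, by
    rw [Finset.smul_sum]; simp [smul_smul]⟩

theorem single_mem_coneGen {S : Set V} {p : V} (hp : p ∈ S) {c : ℝ} (hc : 0 ≤ c) :
    c • p ∈ coneGen S :=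
  ⟨1, fun _ => c, fun _ => p, fun _ => hc, fun _ => hp, by simp⟩

theorem add_mem_coneGen {S : Set V} {x y : V} (hx : x ∈ coneGen S) (hy : y ∈ coneGen S) :
    x + y ∈ coneGen S := by
  obtain ⟨n, a, p, ha, hp, rfl⟩ := hx
  obtain ⟨m, b, q, hb, hq, rfl⟩ := hy
  refine ⟨n + m, Fin.addCases a b, Fin.addCases p q, ?_, ?_, ?_⟩
  · intro i; induction i using Fin.addCases with
    | left i => simpa using ha i
    | right i => simpa using hb i
  · intro i; induction i using Fin.addCases with
    | left i => simpa using hp i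
    | right i => simpa using hq i
  · rw [Fin.sum_univ_add]; simp

theorem convex_coneGen (S : Set V) : Convex ℝ (coneGen S) := fun x hx y hy a b ha hb _ =>
  add_mem_coneGen (smul_mem_coneGen ha hx) (smul_mem_coneGen hb hy)

/-- real point of a lattice point -/
def rPt {d : ℕ} (α : Fin d → ℕ) : Fin d → ℝ := fun i => (α i : ℝ)

theorem rPt_add {d : ℕ} (α β : Fin d → ℕ) : rPt (α + β) = rPt α + rPt β := by
  funext i; simp [rPt]

theorem nptToReal_eq {d : ℕ} (p : NPt d) : nptToReal p = ((p.1 : ℝ), rPt p.2) := rfl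

variable {d : ℕ}

theorem convex_okounkovBody (S : Set (NPt d)) : Convex ℝ (okounkovBody S) := by
  intro x hx y hy a b ha hb hab
  have h := (convex_coneGen (nptToReal '' S)).closure hx hy ha hb hab
  simpa [okounkovBody, Prod.smul_mk, Prod.mk_add_mk, hab] using h

theorem isClosed_okounkovBody (S : Set (NPt d)) : IsClosed (okounkovBody S) :=
  IsClosed.preimage (by fun_prop) isClosed_closure

theorem mem_ok_of_graded {Γ' : Set (NPt d)} {k : ℕ} (hk : 1 ≤ k) {α : Fin d → ℕ}
    (hα : α ∈ gradedPiece Γ' k) : (k : ℝ)⁻¹ • rPt α ∈ okounkovBody Γ' := by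
  have h := single_mem_coneGen (S := nptToReal '' Γ') ⟨(k, α), hα, rfl⟩
      (c := (k : ℝ)⁻¹) (by positivity)
  have hk0 : (k : ℝ) ≠ 0 := by positivity
  refine subset_closure ?_
  have : ((k:ℝ)⁻¹ • nptToReal (k, α)) = ((1 : ℝ), (k:ℝ)⁻¹ • rPt α) := by
    simp [nptToReal_eq, Prod.smul_mk, inv_mul_cancel₀ hk0]
  rwa [this] at h

theorem convexHull_smul_subset_ok {Γ' : Set (NPt d)} {k : ℕ} (hk : 1 ≤ k) {x : Fin d → ℝ}
    (hx : x ∈ convexHull ℝ (rPt '' gradedPiece Γ' k)) : (k : ℝ)⁻¹ • x ∈ okounkovBody Γ' := by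
  have hsub : convexHull ℝ (rPt '' gradedPiece Γ' k) ⊆ {y | (k : ℝ)⁻¹ • y ∈ okounkovBody Γ'} := by
    apply convexHull_min
    · rintro y ⟨α, hα, rfl⟩; exact mem_ok_of_graded hk hα
    · exact (convex_okounkovBody Γ').linear_preimage
        (((k:ℝ)⁻¹) • (LinearMap.id : (Fin d → ℝ) →ₗ[ℝ] (Fin d → ℝ)))
  exact hsub hx

theorem convexHull_graded_one_subset_ok {Γ' : Set (NPt d)} :
    convexHull ℝ (rPt '' gradedPiece Γ' 1) ⊆ okounkovBody Γ' := by
  intro x hx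
  have := convexHull_smul_subset_ok (Γ' := Γ') le_rfl hx
  simpa using this


end OkAux


namespace OkAux
variable {d : ℕ}

theorem coneGen_subset_box {Γ' : Set (NPt d)} {C : ℝ}
    (hC : ∀ p ∈ Γ', (∑ i, (p.2 i : ℝ)) ≤ C * p.1) :
    coneGen (nptToReal '' Γ') ⊆
      {q : ℝ × (Fin d → ℝ) | (∀ i, 0 ≤ q.2 i) ∧ ∑ i, q.2 i ≤ C * q.1} := by
  rintro y ⟨n, c, p, hc, hp, rfl⟩
  have hsnd : (∑ j, c j • p j).2 = ∑ j, c j • (p j).2 := by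
    induction (Finset.univ : Finset (Fin n)) using Finset.induction with
    | empty => simp
    | insert _ _ h ih => simp [Finset.sum_insert h, ih]
  have hfst : (∑ j, c j • p j).1 = ∑ j, c j * (p j).1 := by
    induction (Finset.univ : Finset (Fin n)) using Finset.induction with
    | empty => simp
    | insert _ _ h ih => simp [Finset.sum_insert h, ih]
  have hp2 : ∀ j i, 0 ≤ (p j).2 i := by
    intro j i
    obtain ⟨q, _, hq⟩ := hp j
    rw [← hq]; exact Nat.cast_nonneg _
  have hpC : ∀ j, ∑ i, (p j).2 i ≤ C * (p j).1 := by
    intro j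
    obtain ⟨q, hqΓ, hq⟩ := hp j
    rw [← hq]; exact hC q hqΓ
  constructor
  · intro i
    rw [hsnd, Finset.sum_apply]
    exact Finset.sum_nonneg fun j _ => by
      simpa using mul_nonneg (hc j) (hp2 j i)
  · rw [hsnd, hfst]
    have : ∑ i, (∑ j, c j • (p j).2) i = ∑ j, c j * ∑ i, (p j).2 i := by
      simp_rw [Finset.sum_apply, Pi.smul_apply, smul_eq_mul, Finset.mul_sum]
      exact Finset.sum_comm
    rw [this, Finset.mul_sum]
    refine Finset.sum_le_sum fun j _ => ?_
    calc c j * ∑ i, (p j).2 i ≤ c j * (C * (p j).1) :=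
          mul_le_mul_of_nonneg_left (hpC j) (hc j)
      _ = C * (c j * (p j).1) := by ring

theorem isClosed_box (C : ℝ) :
    IsClosed {q : ℝ × (Fin d → ℝ) | (∀ i, 0 ≤ q.2 i) ∧ ∑ i, q.2 i ≤ C * q.1} := by
  have h1 : IsClosed {q : ℝ × (Fin d → ℝ) | ∀ i, 0 ≤ q.2 i} := by
    have : {q : ℝ × (Fin d → ℝ) | ∀ i, 0 ≤ q.2 i} = ⋂ i, {q : ℝ × (Fin d → ℝ) | 0 ≤ q.2 i} := by
      ext q; simp
    rw [this]
    refine isClosed_iInter fun i => isClosed_le continuous_const ?_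
    exact (continuous_apply i).comp continuous_snd
  have h2 : IsClosed {q : ℝ × (Fin d → ℝ) | ∑ i, q.2 i ≤ C * q.1} := by
    refine isClosed_le ?_ (continuous_const.mul continuous_fst)
    exact continuous_finset_sum _ fun i _ => (continuous_apply i).comp continuous_snd
  exact h1.inter h2

theorem ok_subset_simplex {Γ' : Set (NPt d)} {C : ℝ}
    (hC : ∀ p ∈ Γ', (∑ i, (p.2 i : ℝ)) ≤ C * p.1) :
    okounkovBody Γ' ⊆ {x : Fin d → ℝ | (∀ i, 0 ≤ x i) ∧ ∑ i, x i ≤ C} := by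
  intro x hx
  have h := closure_minimal (coneGen_subset_box hC) (isClosed_box C) hx
  simpa using h

theorem measure_simplex_lt_top (C : ℝ) :
    volume {x : Fin d → ℝ | (∀ i, 0 ≤ x i) ∧ ∑ i, x i ≤ C} < ⊤ := by
  refine lt_of_le_of_lt (measure_mono ?_)
    ((isCompact_univ_pi (fun _ : Fin d => isCompact_Icc (a := (0:ℝ)) (b := C))).measure_lt_top)
  rintro x ⟨hx0, hxs⟩
  rw [Set.mem_univ_pi]
  intro i
  refine ⟨hx0 i, le_trans ?_ hxs⟩
  exact Finset.single_le_sum (fun j _ => hx0 j) (Finset.mem_univ i)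

theorem frank : Module.finrank ℝ (Fin d → ℝ) = d := by
  simp [Module.finrank_fintype_fun_eq_card]

theorem vol_smul (a : ℝ) (ha : 0 ≤ a) (s : Set (Fin d → ℝ)) :
    volume (a • s) = ENNReal.ofReal (a ^ d) * volume s := by
  rw [Measure.addHaar_smul_of_nonneg volume ha s, frank]

end OkAux

namespace OkAux
variable {d : ℕ}

theorem fst_sum {n : ℕ} (f : Fin n → ℝ × (Fin d → ℝ)) : (∑ i, f i).1 = ∑ i, (f i).1 := by
  induction (Finset.univ : Finset (Fin n)) using Finset.induction with
  | empty => simp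
  | insert _ _ h ih => simp [Finset.sum_insert h, ih]

theorem snd_sum {n : ℕ} (f : Fin n → ℝ × (Fin d → ℝ)) : (∑ i, f i).2 = ∑ i, (f i).2 := by
  induction (Finset.univ : Finset (Fin n)) using Finset.induction with
  | empty => simp
  | insert _ _ h ih => simp [Finset.sum_insert h, ih]

theorem gradedPiece_add {Γ : Set (NPt d)} (hadd : IsGradedSubsemigroup Γ) {m m' : ℕ}
    {α β : Fin d → ℕ} (hα : α ∈ gradedPiece Γ m) (hβ : β ∈ gradedPiece Γ m') :
    α + β ∈ gradedPiece Γ (m + m') := by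
  have := hadd _ hα _ hβ
  simpa [gradedPiece, Prod.mk_add_mk] using this

theorem convAdd {Γ : Set (NPt d)} (hadd : IsGradedSubsemigroup Γ) (m m' : ℕ) :
    convexHull ℝ (rPt '' gradedPiece Γ m) + convexHull ℝ (rPt '' gradedPiece Γ m') ⊆
      convexHull ℝ (rPt '' gradedPiece Γ (m + m')) := by
  rw [← convexHull_add]
  apply convexHull_mono
  rintro z ⟨u, ⟨α, hα, rfl⟩, v, ⟨β, hβ, rfl⟩, rfl⟩
  exact ⟨α + β, gradedPiece_add hadd hα hβ, rPt_add α β⟩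

theorem smul_conv_subset {Γ : Set (NPt d)} (hadd : IsGradedSubsemigroup Γ) (m : ℕ) :
    ∀ a : ℕ, 1 ≤ a →
      (a : ℝ) • convexHull ℝ (rPt '' gradedPiece Γ m) ⊆
        convexHull ℝ (rPt '' gradedPiece Γ (a * m)) := by
  intro a
  induction a with
  | zero => omega
  | succ a ih =>
    intro _
    rintro z ⟨y, hy, rfl⟩
    rcases Nat.eq_zero_or_pos a with rfl | ha
    · simpa using hy
    · have h1 : (a : ℝ) • y ∈ convexHull ℝ (rPt '' gradedPiece Γ (a * m)) :=
        ih ha ⟨y, hy, rfl⟩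
      have h2 : ((a : ℝ) • y) + y ∈ convexHull ℝ (rPt '' gradedPiece Γ (a * m + m)) :=
        convAdd hadd _ _ (Set.add_mem_add h1 hy)
      have h4 : a * m + m = (a + 1) * m := by ring
      rw [h4] at h2
      have h3 : ((a + 1 : ℕ) : ℝ) • y = (a : ℝ) • y + y := by
        push_cast
        rw [add_smul, one_smul]
      show ((a + 1 : ℕ) : ℝ) • y ∈ _
      rw [h3]
      exact h2

/-- The rescaled convex hull `Δ_m = (1/m)·conv(Γ_m)`. -/
noncomputable def Dm (Γ : Set (NPt d)) (m : ℕ) : Set (Fin d → ℝ) :=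
  (m : ℝ)⁻¹ • convexHull ℝ (rPt '' gradedPiece Γ m)

theorem convex_Dm (Γ : Set (NPt d)) (m : ℕ) : Convex ℝ (Dm Γ m) :=
  (convex_convexHull ℝ _).smul _

theorem Dm_subset_ok {Γ : Set (NPt d)} {m : ℕ} (hm : 1 ≤ m) : Dm Γ m ⊆ okounkovBody Γ := by
  rintro x ⟨y, hy, rfl⟩
  exact convexHull_smul_subset_ok hm hy

theorem Dm_mono {Γ : Set (NPt d)} (hadd : IsGradedSubsemigroup Γ) {m c : ℕ}
    (hm : 1 ≤ m) (hc : 1 ≤ c) : Dm Γ m ⊆ Dm Γ (c * m) := by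
  rintro x ⟨y, hy, rfl⟩
  have h1 : (c : ℝ) • y ∈ convexHull ℝ (rPt '' gradedPiece Γ (c * m)) :=
    smul_conv_subset hadd m c hc ⟨y, hy, rfl⟩
  refine ⟨(c : ℝ) • y, h1, ?_⟩
  show ((c * m : ℕ) : ℝ)⁻¹ • ((c : ℝ) • y) = (m : ℝ)⁻¹ • y
  rw [smul_smul]
  congr 1
  have hc0 : (c : ℝ) ≠ 0 := by positivity
  have hm0 : (m : ℝ) ≠ 0 := by positivity
  push_cast
  field_simp

/-- The increasing union `W = ⋃ₙ Δ_{(n+1)!}`. -/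
noncomputable def W (Γ : Set (NPt d)) : Set (Fin d → ℝ) :=
  ⋃ n : ℕ, Dm Γ (Nat.factorial (n + 1))

theorem EW_mono {Γ : Set (NPt d)} (hadd : IsGradedSubsemigroup Γ) :
    Monotone (fun n : ℕ => Dm Γ (Nat.factorial (n + 1))) := by
  apply monotone_nat_of_le_succ
  intro n
  have h : Nat.factorial (n + 2) = (n + 2) * Nat.factorial (n + 1) := Nat.factorial_succ _
  have := Dm_mono (Γ := Γ) hadd (m := Nat.factorial (n + 1)) (c := n + 2)
    (Nat.one_le_iff_ne_zero.mpr (Nat.factorial_pos _).ne') (by omega)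
  rw [← h] at this
  exact this

theorem convex_W {Γ : Set (NPt d)} (hadd : IsGradedSubsemigroup Γ) : Convex ℝ (W Γ) := by
  intro x hx y hy a b ha hb hab
  obtain ⟨_, ⟨n, rfl⟩, hxn⟩ := hx
  obtain ⟨_, ⟨m, rfl⟩, hym⟩ := hy
  have hx' : x ∈ Dm Γ (Nat.factorial (max n m + 1)) := EW_mono hadd (le_max_left n m) hxn
  have hy' : y ∈ Dm Γ (Nat.factorial (max n m + 1)) := EW_mono hadd (le_max_right n m) hym
  exact Set.mem_iUnion.mpr ⟨max n m, convex_Dm Γ _ hx' hy' ha hb hab⟩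

theorem Dm_subset_W {Γ : Set (NPt d)} (hadd : IsGradedSubsemigroup Γ) {m : ℕ} (hm : 1 ≤ m) :
    Dm Γ m ⊆ W Γ := by
  obtain ⟨j, rfl⟩ : ∃ j, m = j + 1 := ⟨m - 1, by omega⟩
  intro x hx
  have h1 : Dm Γ (j + 1) ⊆ Dm Γ (Nat.factorial j * (j + 1)) :=
    Dm_mono hadd hm (Nat.one_le_iff_ne_zero.mpr (Nat.factorial_pos _).ne')
  have h2 : Nat.factorial j * (j + 1) = Nat.factorial (j + 1) := by
    rw [Nat.factorial_succ]; ring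
  exact Set.mem_iUnion.mpr ⟨j, by rw [← h2]; exact h1 hx⟩

theorem W_subset_ok {Γ : Set (NPt d)} : W Γ ⊆ okounkovBody Γ := by
  intro x hx
  obtain ⟨_, ⟨n, rfl⟩, hxn⟩ := hx
  exact Dm_subset_ok (Nat.one_le_iff_ne_zero.mpr (Nat.factorial_pos _).ne') hxn

theorem snd_eq_zero_of_deg_zero {Γ : Set (NPt d)} {C : ℝ}
    (hC : ∀ p ∈ Γ, (∑ i, (p.2 i : ℝ)) ≤ C * p.1) {α : Fin d → ℕ} (hα : (0, α) ∈ Γ) :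
    α = 0 := by
  have h := hC _ hα
  simp only [Nat.cast_zero, mul_zero] at h
  funext i
  have h1 : (α i : ℝ) ≤ ∑ j, (α j : ℝ) :=
    Finset.single_le_sum (f := fun j => (α j : ℝ)) (fun j _ => Nat.cast_nonneg _)
      (Finset.mem_univ i)
  have h2 : (α i : ℝ) = 0 := le_antisymm (h1.trans h) (Nat.cast_nonneg _)
  exact_mod_cast h2

end OkAux

namespace OkAux
variable {d : ℕ}

theorem slice_subset_W {Γ : Set (NPt d)} (hadd : IsGradedSubsemigroup Γ) {C : ℝ}
    (hC : ∀ p ∈ Γ, (∑ i, (p.2 i : ℝ)) ≤ C * p.1)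
    {N : ℕ} (hN : 1 ≤ N) (hne : (gradedPiece Γ N).Nonempty)
    {x : Fin d → ℝ} (hx : ((1 : ℝ), x) ∈ coneGen (nptToReal '' Γ)) :
    x ∈ W Γ := by
  obtain ⟨n, c, p, hc, hp, heq⟩ := hx
  choose g hgΓ hgeq using hp
  -- base point
  obtain ⟨α₀, hα₀⟩ := hne
  have hbase : (N : ℝ)⁻¹ • rPt α₀ ∈ W Γ :=
    Dm_subset_W hadd hN ⟨rPt α₀, subset_convexHull ℝ _ ⟨α₀, hα₀, rfl⟩, rfl⟩
  -- components
  have h1 : (1 : ℝ) = ∑ i, c i * ((g i).1 : ℝ) := by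
    have := congrArg Prod.fst heq
    rw [fst_sum] at this
    simpa [← hgeq, nptToReal_eq] using this
  have h2 : x = ∑ i, c i • rPt (g i).2 := by
    have := congrArg Prod.snd heq
    rw [snd_sum] at this
    simpa [← hgeq, nptToReal_eq] using this
  set w : Fin n → ℝ := fun i => c i * ((g i).1 : ℝ) with hw
  set q : Fin n → (Fin d → ℝ) := fun i =>
    if (g i).1 = 0 then (N : ℝ)⁻¹ • rPt α₀ else (((g i).1 : ℝ))⁻¹ • rPt (g i).2 with hq
  have hqW : ∀ i, q i ∈ W Γ := by
    intro i
    by_cases h0 : (g i).1 = 0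
    · simp [hq, h0, hbase]
    · have hge : 1 ≤ (g i).1 := Nat.one_le_iff_ne_zero.mpr h0
      have hmem : (g i).2 ∈ gradedPiece Γ (g i).1 := by
        have : ((g i).1, (g i).2) ∈ Γ := by
          rw [Prod.mk.eta]; exact hgΓ i
        exact this
      have : (((g i).1 : ℝ))⁻¹ • rPt (g i).2 ∈ Dm Γ ((g i).1) :=
        ⟨rPt (g i).2, subset_convexHull ℝ _ ⟨(g i).2, hmem, rfl⟩, rfl⟩
      simp only [hq, if_neg h0]
      exact Dm_subset_W hadd hge this
  have hsum : ∑ i, w i • q i ∈ W Γ := by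
    refine (convex_W hadd).sum_mem (fun i _ => mul_nonneg (hc i) (Nat.cast_nonneg _)) ?_
      (fun i _ => hqW i)
    exact h1.symm
  have hxe : ∑ i, w i • q i = x := by
    rw [h2]
    apply Finset.sum_congr rfl
    intro i _
    by_cases h0 : (g i).1 = 0
    · have hz : (g i).2 = 0 := by
        apply snd_eq_zero_of_deg_zero hC
        have : ((g i).1, (g i).2) ∈ Γ := by rw [Prod.mk.eta]; exact hgΓ i
        rwa [h0] at this
      have hr0 : rPt (0 : Fin d → ℕ) = 0 := by funext j; simp [rPt]
      simp [hq, hw, h0, hz, hr0]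
    · simp only [hq, hw, if_neg h0]
      rw [smul_smul, mul_assoc, mul_inv_cancel₀ (by exact_mod_cast h0), mul_one]
  rwa [hxe] at hsum

theorem ok_subset_closure_W {Γ : Set (NPt d)} (hadd : IsGradedSubsemigroup Γ) {C : ℝ}
    (hC : ∀ p ∈ Γ, (∑ i, (p.2 i : ℝ)) ≤ C * p.1)
    {N : ℕ} (hN : 1 ≤ N) (hne : (gradedPiece Γ N).Nonempty) :
    okounkovBody Γ ⊆ closure (W Γ) := by
  intro x hx
  obtain ⟨u, hu, hulim⟩ := mem_closure_iff_seq_limit.mp hx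
  have ht : Tendsto (fun n => (u n).1) atTop (nhds 1) :=
    ((continuous_fst.tendsto _).comp hulim)
  have hy : Tendsto (fun n => (u n).2) atTop (nhds x) :=
    ((continuous_snd.tendsto _).comp hulim)
  have hev : ∀ᶠ n in atTop, (0 : ℝ) < (u n).1 :=
    ht.eventually (eventually_gt_nhds one_pos)
  have hmem : ∀ᶠ n in atTop, ((u n).1)⁻¹ • (u n).2 ∈ W Γ := by
    filter_upwards [hev] with n hn
    have hsm : ((u n).1)⁻¹ • u n ∈ coneGen (nptToReal '' Γ) :=
      smul_mem_coneGen (by positivity) (hu n)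
    have : (((u n).1)⁻¹ • u n) = ((1 : ℝ), ((u n).1)⁻¹ • (u n).2) := by
      have : ((u n).1)⁻¹ * (u n).1 = 1 := inv_mul_cancel₀ hn.ne'
      simp [Prod.smul_def, this, smul_eq_mul]
    rw [this] at hsm
    exact slice_subset_W hadd hC hN hne hsm
  have hlim : Tendsto (fun n => ((u n).1)⁻¹ • (u n).2) atTop (nhds x) := by
    have := Tendsto.smul (ht.inv₀ one_ne_zero) hy
    simpa using this
  exact mem_closure_of_tendsto hlim hmem

end OkAux

namespace OkAux
variable {d : ℕ}

theorem interior_ok_subset_W {Γ : Set (NPt d)} (hadd : IsGradedSubsemigroup Γ) {C : ℝ}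
    (hC : ∀ p ∈ Γ, (∑ i, (p.2 i : ℝ)) ≤ C * p.1)
    {N : ℕ} (hN : 1 ≤ N) (hne : (gradedPiece Γ N).Nonempty)
    (hint : (interior (okounkovBody Γ)).Nonempty) :
    interior (okounkovBody Γ) ⊆ W Γ := by
  set K := okounkovBody Γ with hK
  have hKconv : Convex ℝ K := convex_okounkovBody Γ
  have hKclosed : IsClosed K := isClosed_okounkovBody Γ
  have hclW : closure (W Γ) = K := by
    apply le_antisymm
    · exact closure_minimal W_subset_ok hKclosed
    · exact ok_subset_closure_W hadd hC hN hne
  have haff : affineSpan ℝ K = ⊤ := hKconv.interior_nonempty_iff_affineSpan_eq_top.mp hint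
  have hKaffW : K ⊆ (affineSpan ℝ (W Γ) : Set (Fin d → ℝ)) := by
    rw [← hclW]
    have := closure_minimal (subset_affineSpan ℝ (W Γ))
      (affineSpan ℝ (W Γ)).closed_of_finiteDimensional
    exact this
  have haffW : affineSpan ℝ (W Γ) = ⊤ := by
    apply top_unique
    rw [← haff]
    exact affineSpan_le.mpr hKaffW
  obtain ⟨z₀, hz₀⟩ := (convex_W hadd).interior_nonempty_iff_affineSpan_eq_top.mpr haffW
  intro x hx
  obtain ⟨ε, hε, hball⟩ := Metric.isOpen_iff.mp isOpen_interior x hx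
  set nx : ℝ := ‖x - z₀‖ with hnx
  have hnx0 : 0 ≤ nx := norm_nonneg _
  set t : ℝ := ε / (2 * (nx + 1)) with hts
  have ht : 0 < t := by positivity
  set y : Fin d → ℝ := x + t • (x - z₀) with hy
  have hyball : y ∈ Metric.ball x ε := by
    rw [Metric.mem_ball, dist_eq_norm]
    have : y - x = t • (x - z₀) := by rw [hy]; abel
    rw [this, norm_smul, Real.norm_eq_abs, abs_of_pos ht, ← hnx]
    rw [hts]
    rw [div_mul_eq_mul_div, div_lt_iff₀ (by positivity)]
    nlinarith
  have hyK : y ∈ closure (W Γ) := by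
    rw [hclW]
    exact interior_subset (hball hyball)
  have hxseg : x ∈ openSegment ℝ z₀ y := by
    refine ⟨t / (1 + t), 1 / (1 + t), by positivity, by positivity, ?_, ?_⟩
    · field_simp
      ring
    · have h1t : (1 + t) ≠ 0 := by positivity
      rw [hy]
      match_scalars <;> field_simp <;> ring
  have := (convex_W hadd).openSegment_interior_closure_subset_interior hz₀ hyK hxseg
  exact interior_subset this

theorem measure_ok_le_interior (Γ : Set (NPt d)) :
    volume (okounkovBody Γ) ≤ volume (interior (okounkovBody Γ)) := by
  have hKclosed : IsClosed (okounkovBody Γ) := isClosed_okounkovBody Γ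
  calc volume (okounkovBody Γ)
      = volume (closure (okounkovBody Γ)) := by rw [hKclosed.closure_eq]
    _ = volume (interior (okounkovBody Γ) ∪ frontier (okounkovBody Γ)) := by
        rw [closure_eq_interior_union_frontier]
    _ ≤ volume (interior (okounkovBody Γ)) + volume (frontier (okounkovBody Γ)) :=
        measure_union_le _ _
    _ = volume (interior (okounkovBody Γ)) := by
        rw [(convex_okounkovBody Γ).addHaar_frontier volume, add_zero]

theorem measure_ok_le_iSup {Γ : Set (NPt d)} (hadd : IsGradedSubsemigroup Γ) {C : ℝ}
    (hC : ∀ p ∈ Γ, (∑ i, (p.2 i : ℝ)) ≤ C * p.1)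
    {N : ℕ} (hN : 1 ≤ N) (hne : (gradedPiece Γ N).Nonempty)
    (hint : (interior (okounkovBody Γ)).Nonempty) :
    volume (okounkovBody Γ) ≤ ⨆ n : ℕ, volume (Dm Γ (Nat.factorial (n + 1))) := by
  have h1 : volume (okounkovBody Γ) ≤ volume (interior (okounkovBody Γ)) := by
    have hKclosed : IsClosed (okounkovBody Γ) := isClosed_okounkovBody Γ
    calc volume (okounkovBody Γ)
        = volume (closure (okounkovBody Γ)) := by rw [hKclosed.closure_eq]
      _ = volume (interior (okounkovBody Γ) ∪ frontier (okounkovBody Γ)) := by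
          rw [closure_eq_interior_union_frontier]
      _ ≤ volume (interior (okounkovBody Γ)) + volume (frontier (okounkovBody Γ)) :=
          measure_union_le _ _
      _ = volume (interior (okounkovBody Γ)) := by
          rw [(convex_okounkovBody Γ).addHaar_frontier volume, add_zero]
  calc volume (okounkovBody Γ) ≤ volume (interior (okounkovBody Γ)) := h1
    _ ≤ volume (W Γ) := measure_mono (interior_ok_subset_W hadd hC hN hne hint)
    _ = ⨆ n : ℕ, volume (Dm Γ (Nat.factorial (n + 1))) := (EW_mono hadd).measure_iUnion

end OkAux

namespace OkAux
variable {d : ℕ}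

theorem exists_N0 {Γ : Set (NPt d)} (hadd : IsGradedSubsemigroup Γ)
    (hgen : AddSubgroup.closure (nptToInt '' Γ) = ⊤) :
    ∃ N0 : ℕ, 1 ≤ N0 ∧ ∀ k, N0 ≤ k → (gradedPiece Γ k).Nonempty := by
  classical
  set M : Set ℕ := {m | (gradedPiece Γ m).Nonempty} with hM
  have hMadd : ∀ m ∈ M, ∀ m' ∈ M, m + m' ∈ M := by
    rintro m ⟨α, hα⟩ m' ⟨β, hβ⟩
    exact ⟨α + β, gradedPiece_add hadd hα hβ⟩
  have hMsmul : ∀ j : ℕ, 1 ≤ j → ∀ m ∈ M, j * m ∈ M := by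
    intro j
    induction j with
    | zero => omega
    | succ j ih =>
      intro _ m hm
      rcases Nat.eq_zero_or_pos j with rfl | hj
      · simpa using hm
      · have := hMadd _ (ih hj m hm) _ hm
        have he : j * m + m = (j + 1) * m := by ring
        rwa [he] at this
  -- the degrees of Γ generate ℤ
  set f : (ℤ × (Fin d → ℤ)) →+ ℤ := AddMonoidHom.fst ℤ (Fin d → ℤ) with hf
  have hfs : Function.Surjective f := fun x => ⟨(x, 0), rfl⟩
  have hdeg : AddSubgroup.closure ((fun m : ℕ => (m : ℤ)) '' M) = ⊤ := by
    apply top_unique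
    have h1 : (AddSubgroup.closure (nptToInt '' Γ)).map f = ⊤ := by
      rw [hgen]; exact AddSubgroup.map_top_of_surjective f hfs
    rw [AddMonoidHom.map_closure] at h1
    have h2 : f '' (nptToInt '' Γ) ⊆ (fun m : ℕ => (m : ℤ)) '' M := by
      rintro x ⟨y, ⟨p, hp, rfl⟩, rfl⟩
      refine ⟨p.1, ⟨p.2, ?_⟩, rfl⟩
      show (p.1, p.2) ∈ Γ
      rwa [Prod.mk.eta]
    rw [← h1]
    exact AddSubgroup.closure_mono h2
  -- representation 1 = u - v with u, v sums of degrees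
  set T : Set ℤ := (fun m : ℕ => (m : ℤ)) '' M with hT
  set S : AddSubmonoid ℤ := AddSubmonoid.closure T with hS
  have hrep : ∃ u ∈ S, ∃ v ∈ S, (1 : ℤ) = u - v := by
    set H : AddSubgroup ℤ :=
      { carrier := {x | ∃ u ∈ S, ∃ v ∈ S, x = u - v}
        zero_mem' := ⟨0, zero_mem _, 0, zero_mem _, by ring⟩
        add_mem' := by
          rintro x y ⟨u₁, hu₁, v₁, hv₁, rfl⟩ ⟨u₂, hu₂, v₂, hv₂, rfl⟩
          exact ⟨u₁ + u₂, add_mem hu₁ hu₂, v₁ + v₂, add_mem hv₁ hv₂, by ring⟩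
        neg_mem' := by
          rintro x ⟨u, hu, v, hv, rfl⟩
          exact ⟨v, hv, u, hu, by ring⟩ } with hH
    have hle : AddSubgroup.closure T ≤ H := by
      rw [AddSubgroup.closure_le]
      intro t ht
      exact ⟨t, AddSubmonoid.subset_closure ht, 0, zero_mem _, by ring⟩
    have : (1 : ℤ) ∈ AddSubgroup.closure T := by rw [hdeg]; trivial
    exact hle this
  -- S ⊆ T ∪ {0}
  have hSsub : (S : Set ℤ) ⊆ T ∪ {0} := by
    set K : AddSubmonoid ℤ :=
      { carrier := T ∪ {0}
        zero_mem' := Or.inr rfl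
        add_mem' := by
          rintro x y (⟨m, hm, rfl⟩ | hx0) (⟨m', hm', rfl⟩ | hy0)
          · exact Or.inl ⟨m + m', hMadd m hm m' hm', by push_cast; ring⟩
          · simp only [Set.mem_singleton_iff] at hy0
            subst hy0
            exact Or.inl ⟨m, hm, by ring⟩
          · simp only [Set.mem_singleton_iff] at hx0
            subst hx0
            exact Or.inl ⟨m', hm', by ring⟩
          · simp only [Set.mem_singleton_iff] at hx0 hy0
            subst hx0; subst hy0
            exact Or.inr (by simp) } with hK
    have : S ≤ K := by
      rw [hS]
      exact AddSubmonoid.closure_le.mpr Set.subset_union_left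
    exact this
  obtain ⟨u, hu, v, hv, huv⟩ := hrep
  -- extract natural numbers
  have hkey : ∃ a b : ℕ, b = a + 1 ∧ (a = 0 ∨ a ∈ M) ∧ b ∈ M := by
    rcases hSsub hu with ⟨bm, hbm, hbu⟩ | hu0
    · rcases hSsub hv with ⟨am, ham, hav⟩ | hv0
      · refine ⟨am, bm, ?_, Or.inr ham, hbm⟩
        have h1 : (bm : ℤ) = u := hbu
        have h2 : (am : ℤ) = v := hav
        have : (bm : ℤ) = (am : ℤ) + 1 := by omega
        exact_mod_cast this
      · simp only [Set.mem_singleton_iff] at hv0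
        refine ⟨0, bm, ?_, Or.inl rfl, hbm⟩
        have h1 : (bm : ℤ) = u := hbu
        have : (bm : ℤ) = 1 := by omega
        exact_mod_cast this
    · exfalso
      simp only [Set.mem_singleton_iff] at hu0
      rcases hSsub hv with ⟨am, ham, hav⟩ | hv0
      · have h2 : (am : ℤ) = v := hav
        have h3 : (0 : ℤ) ≤ (am : ℤ) := Int.natCast_nonneg _
        omega
      · simp only [Set.mem_singleton_iff] at hv0
        rw [hu0, hv0] at huv
        norm_num at huv
  obtain ⟨a, b, hba, haM, hbM⟩ := hkey
  rcases haM with rfl | haM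
  · -- 1 ∈ M
    refine ⟨1, le_rfl, fun k hk => ?_⟩
    have : k * 1 ∈ M := hMsmul k hk 1 (by simpa [hba] using hbM)
    exact (by simpa using this : k ∈ M)
  · -- a, a+1 ∈ M, a ≥ 1 (if a = 0 then a ∈ M means handled same way below)
    rcases Nat.eq_zero_or_pos a with rfl | ha
    · refine ⟨1, le_rfl, fun k hk => ?_⟩
      have : k * 1 ∈ M := hMsmul k hk 1 (by simpa [hba] using hbM)
      exact (by simpa using this : k ∈ M)
    · refine ⟨a * a + 1, by omega, fun k hk => ?_⟩
      set q := k / a with hq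
      set s := k % a with hs
      have hsa : s < a := Nat.mod_lt _ ha
      have hdm : a * q + s = k := Nat.div_add_mod k a
      have haq : a ≤ q := by
        rw [hq, Nat.le_div_iff_mul_le ha]
        omega
      obtain ⟨e, he⟩ : ∃ e, q = e + s := ⟨q - s, by omega⟩
      have hk2 : e * a + s * (a + 1) = k := by rw [← hdm, he]; ring
      have he1 : 1 ≤ e := by omega
      have h1 : e * a ∈ M := hMsmul e he1 a haM
      rcases Nat.eq_zero_or_pos s with hs0 | hs1
      · rw [hs0] at hk2
        simp only [zero_mul, add_zero] at hk2
        rwa [hk2] at h1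
      · have h2 : s * (a + 1) ∈ M := hMsmul s hs1 (a + 1) (by rwa [← hba])
        have := hMadd _ h1 _ h2
        rwa [hk2] at this

end OkAux

namespace OkAux
variable {d : ℕ}

theorem Gk_deg_zero {Γ Γk' : Set (NPt d)} {C : ℝ} {k : ℕ}
    (hC : ∀ p ∈ Γ, (∑ i, (p.2 i : ℝ)) ≤ C * p.1)
    (hsemi : IsGradedSubsemigroup Γk')
    (h1 : ∀ α, (1, α) ∈ Γk' ↔ (k, α) ∈ Γ)
    (hne : (gradedPiece Γ k).Nonempty)
    {β : Fin d → ℕ} (hβ : (0, β) ∈ Γk') : β = 0 := by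
  obtain ⟨α₀, hα₀⟩ := hne
  have hstep : ∀ n : ℕ, ((1 : ℕ), α₀ + n • β) ∈ Γk' := by
    intro n
    induction n with
    | zero => simpa using (h1 α₀).mpr hα₀
    | succ n ih =>
      have h := hsemi _ ih _ hβ
      have he : ((1 : ℕ), α₀ + n • β) + (0, β) = ((1 : ℕ), α₀ + (n + 1) • β) := by
        rw [Prod.mk_add_mk]
        refine Prod.ext rfl ?_
        rw [succ_nsmul]
        abel_nf
      rwa [he] at h
  by_contra hβ0
  obtain ⟨j, hj⟩ : ∃ j, β j ≠ 0 := by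
    by_contra h
    push_neg at h
    exact hβ0 (funext fun j => h j)
  set n := Nat.ceil (C * k) + 1 with hn
  have hmem : α₀ + n • β ∈ gradedPiece Γ k := (h1 _).mp (hstep n)
  have hsum := hC _ hmem
  simp only at hsum
  have hlow : (n : ℝ) ≤ ∑ i, (((α₀ + n • β) i : ℕ) : ℝ) := by
    have hj1 : (n : ℝ) ≤ (((α₀ + n • β) j : ℕ) : ℝ) := by
      have : n ≤ (α₀ + n • β) j := by
        simp only [Pi.add_apply, Pi.smul_apply, smul_eq_mul]
        have : 1 ≤ β j := Nat.one_le_iff_ne_zero.mpr hj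
        nlinarith
      exact_mod_cast this
    refine le_trans hj1 ?_
    exact Finset.single_le_sum (f := fun i => (((α₀ + n • β) i : ℕ) : ℝ))
      (fun i _ => Nat.cast_nonneg _) (Finset.mem_univ j)
  have hup : (n : ℝ) ≤ C * k := le_trans hlow hsum
  have hceil : C * k ≤ (Nat.ceil (C * k) : ℝ) := Nat.le_ceil _
  rw [hn] at hup
  push_cast at hup
  linarith

theorem conv_subset_ok_Gk {Γ Γk' : Set (NPt d)} {k : ℕ}
    (h1 : ∀ α, (1, α) ∈ Γk' ↔ (k, α) ∈ Γ) :
    convexHull ℝ (rPt '' gradedPiece Γ k) ⊆ okounkovBody Γk' := by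
  have he : gradedPiece Γ k = gradedPiece Γk' 1 := by
    ext α
    exact (h1 α).symm
  rw [he]
  exact convexHull_graded_one_subset_ok

theorem ok_Gk_subset {Γ Γk' : Set (NPt d)} {C : ℝ} {k : ℕ} (hk : 1 ≤ k)
    (hC : ∀ p ∈ Γ, (∑ i, (p.2 i : ℝ)) ≤ C * p.1)
    (hsemi : IsGradedSubsemigroup Γk')
    (h1 : ∀ α, (1, α) ∈ Γk' ↔ (k, α) ∈ Γ)
    (hrk : ∀ r, 1 ≤ r → ∀ α, (r, α) ∈ Γk' → (k * r, α) ∈ Γ)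
    (hne : (gradedPiece Γ k).Nonempty) :
    okounkovBody Γk' ⊆ (k : ℝ) • okounkovBody Γ := by
  obtain ⟨α₀, hα₀⟩ := hne
  have hΓne : ∃ γ₀ : NPt d, γ₀ ∈ Γ := ⟨(k, α₀), hα₀⟩
  obtain ⟨γ₀, hγ₀⟩ := hΓne
  intro x hx
  set φ : (ℝ × (Fin d → ℝ)) → (ℝ × (Fin d → ℝ)) := fun q => ((k : ℝ) * q.1, q.2) with hφ
  have hφc : Continuous φ := by fun_prop
  have himg : ∀ y ∈ coneGen (nptToReal '' Γk'), φ y ∈ coneGen (nptToReal '' Γ) := by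
    rintro y ⟨n, c, p, hc, hp, rfl⟩
    choose g hgΓ hgeq using hp
    refine ⟨n, fun i => if (g i).1 = 0 then 0 else c i,
      fun i => if (g i).1 = 0 then nptToReal γ₀ else nptToReal (k * (g i).1, (g i).2),
      ?_, ?_, ?_⟩
    · intro i
      by_cases h0 : (g i).1 = 0 <;> simp [h0]
      exact hc i
    · intro i
      by_cases h0 : (g i).1 = 0 <;> simp only [h0, if_true, if_false, if_pos, if_neg,
        not_false_iff]
      · exact ⟨γ₀, hγ₀, rfl⟩
      · refine ⟨(k * (g i).1, (g i).2), ?_, rfl⟩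
        refine hrk _ (Nat.one_le_iff_ne_zero.mpr h0) _ ?_
        rw [Prod.mk.eta]
        exact hgΓ i
    · refine Prod.ext ?_ ?_
      · show (k : ℝ) * (∑ i, c i • p i).1 = (∑ i,
            (if (g i).1 = 0 then (0 : ℝ) else c i) •
              (if (g i).1 = 0 then nptToReal γ₀ else nptToReal (k * (g i).1, (g i).2))).1
        rw [fst_sum, fst_sum, Finset.mul_sum]
        refine Finset.sum_congr rfl fun i _ => ?_
        by_cases h0 : (g i).1 = 0
        · simp [← hgeq i, nptToReal_eq, h0]
        · simp only [← hgeq i, nptToReal_eq, if_neg h0, Prod.smul_fst, smul_eq_mul]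
          push_cast
          ring
      · show (∑ i, c i • p i).2 = (∑ i,
            (if (g i).1 = 0 then (0 : ℝ) else c i) •
              (if (g i).1 = 0 then nptToReal γ₀ else nptToReal (k * (g i).1, (g i).2))).2
        rw [snd_sum, snd_sum]
        refine Finset.sum_congr rfl fun i _ => ?_
        by_cases h0 : (g i).1 = 0
        · have hmem : ((0 : ℕ), (g i).2) ∈ Γk' := by
            have h' : ((g i).1, (g i).2) ∈ Γk' := by rw [Prod.mk.eta]; exact hgΓ i
            rwa [h0] at h'
          have hz : (g i).2 = 0 := Gk_deg_zero hC hsemi h1 ⟨α₀, hα₀⟩ hmem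
          have hr0 : rPt ((0 : Fin d → ℕ)) = 0 := by funext j; simp [rPt]
          simp [← hgeq i, nptToReal_eq, h0, hz, hr0]
        · simp [← hgeq i, nptToReal_eq, if_neg h0]
  have h2 : φ ((1 : ℝ), x) ∈ closure (coneGen (nptToReal '' Γ)) := by
    have him : φ '' closure (coneGen (nptToReal '' Γk')) ⊆
        closure (φ '' coneGen (nptToReal '' Γk')) :=
      image_closure_subset_closure_image hφc
    have h3 : φ '' coneGen (nptToReal '' Γk') ⊆ coneGen (nptToReal '' Γ) := by
      rintro _ ⟨y, hy, rfl⟩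
      exact himg y hy
    exact (closure_mono h3) (him ⟨_, hx, rfl⟩)
  have hk0 : (k : ℝ) ≠ 0 := by positivity
  have h4 : ((k : ℝ), x) ∈ closure (coneGen (nptToReal '' Γ)) := by
    have : φ ((1 : ℝ), x) = ((k : ℝ), x) := by simp [hφ]
    rwa [this] at h2
  have h5 : ((1 : ℝ), (k : ℝ)⁻¹ • x) ∈ closure (coneGen (nptToReal '' Γ)) := by
    have hcont : Continuous (fun q : ℝ × (Fin d → ℝ) => (k : ℝ)⁻¹ • q) := by fun_prop
    have him := image_closure_subset_closure_image hcont (s := coneGen (nptToReal '' Γ))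
    have h6 : (k : ℝ)⁻¹ • ((k : ℝ), x) ∈
        closure ((fun q : ℝ × (Fin d → ℝ) => (k : ℝ)⁻¹ • q) '' coneGen (nptToReal '' Γ)) :=
      him ⟨_, h4, rfl⟩
    have h7 : ((fun q : ℝ × (Fin d → ℝ) => (k : ℝ)⁻¹ • q) '' coneGen (nptToReal '' Γ)) ⊆
        coneGen (nptToReal '' Γ) := by
      rintro _ ⟨y, hy, rfl⟩
      exact smul_mem_coneGen (by positivity) hy
    have h8 := (closure_mono h7) h6
    have h9 : (k : ℝ)⁻¹ • ((k : ℝ), x) = ((1 : ℝ), (k : ℝ)⁻¹ • x) := by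
      simp [Prod.smul_mk, inv_mul_cancel₀ hk0]
    rwa [h9] at h8
  refine ⟨(k : ℝ)⁻¹ • x, h5, ?_⟩
  show (k : ℝ) • ((k : ℝ)⁻¹ • x) = x
  rw [smul_smul, mul_inv_cancel₀ hk0, one_smul]

end OkAux

open OkAux in
theorem vol_okounkov_of_regraded_tendsto
    (d : ℕ) (hd : 1 ≤ d) (Γ : Set (NPt d)) (hΓ : IsAdmissible Γ)
    (Γk : ℕ → Set (NPt d))
    (hsemi : ∀ k, 1 ≤ k → IsGradedSubsemigroup (Γk k))
    (h1 : ∀ k, 1 ≤ k → ∀ α, (1, α) ∈ Γk k ↔ (k, α) ∈ Γ)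
    (hr : ∀ k, 1 ≤ k → ∀ r, 1 ≤ r → ∀ α, (r, α) ∈ Γk k → (k * r, α) ∈ Γ) :
    Filter.Tendsto
      (fun k : ℕ => ((k : ℝ) ^ d)⁻¹ * (volume (okounkovBody (Γk k))).toReal)
      Filter.atTop
      (nhds ((volume (okounkovBody Γ)).toReal)) := by
  classical
  obtain ⟨hadd, ⟨C, hCpos, hC⟩, hgen⟩ := hΓ
  obtain ⟨N0, hN01, hN0⟩ := exists_N0 hadd hgen
  set V : ℝ := (volume (okounkovBody Γ)).toReal with hV
  have hΔfin : volume (okounkovBody Γ) ≠ ⊤ :=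
    (lt_of_le_of_lt (measure_mono (ok_subset_simplex hC)) (measure_simplex_lt_top C)).ne
  -- the rescaled convex hulls sit inside `k • Δ`
  have hconv_sub : ∀ k : ℕ, 1 ≤ k →
      convexHull ℝ (rPt '' gradedPiece Γ k) ⊆ (k : ℝ) • okounkovBody Γ := by
    intro k hk x hx
    refine ⟨(k : ℝ)⁻¹ • x, convexHull_smul_subset_ok hk hx, ?_⟩
    show (k : ℝ) • ((k : ℝ)⁻¹ • x) = x
    rw [smul_smul, mul_inv_cancel₀ (by positivity : (k : ℝ) ≠ 0), one_smul]
  have hvolsmul : ∀ k : ℕ, volume ((k : ℝ) • okounkovBody Γ) =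
      ENNReal.ofReal ((k : ℝ) ^ d) * volume (okounkovBody Γ) :=
    fun k => vol_smul _ (by positivity) _
  have hprodfin : ∀ k : ℕ,
      ENNReal.ofReal ((k : ℝ) ^ d) * volume (okounkovBody Γ) ≠ ⊤ :=
    fun k => ENNReal.mul_ne_top ENNReal.ofReal_ne_top hΔfin
  have hconvfin : ∀ k : ℕ, 1 ≤ k →
      volume (convexHull ℝ (rPt '' gradedPiece Γ k)) ≠ ⊤ := by
    intro k hk
    refine ne_top_of_le_ne_top (hprodfin k) ?_
    rw [← hvolsmul k]
    exact measure_mono (hconv_sub k hk)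
  set f : ℕ → ℝ := fun k =>
    ((k : ℝ) ^ d)⁻¹ * (volume (convexHull ℝ (rPt '' gradedPiece Γ k))).toReal with hf
  have hf_nonneg : ∀ k, 0 ≤ f k := fun k => mul_nonneg (by positivity) ENNReal.toReal_nonneg
  have hf_le : ∀ k : ℕ, 1 ≤ k → f k ≤ V := by
    intro k hk
    have hkd : (0 : ℝ) < (k : ℝ) ^ d := by positivity
    have h2 : (volume (convexHull ℝ (rPt '' gradedPiece Γ k))).toReal ≤ ((k : ℝ) ^ d) * V := by
      have h3 : volume (convexHull ℝ (rPt '' gradedPiece Γ k)) ≤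
          ENNReal.ofReal ((k : ℝ) ^ d) * volume (okounkovBody Γ) := by
        rw [← hvolsmul k]; exact measure_mono (hconv_sub k hk)
      have h4 := ENNReal.toReal_mono (hprodfin k) h3
      rwa [ENNReal.toReal_mul, ENNReal.toReal_ofReal (by positivity)] at h4
    calc f k ≤ ((k : ℝ) ^ d)⁻¹ * (((k : ℝ) ^ d) * V) := by
          exact mul_le_mul_of_nonneg_left h2 (by positivity)
      _ = V := by field_simp
  -- `f` tends to `V`
  have hf_tendsto : Tendsto f atTop (nhds V) := by
    rw [tendsto_order]
    constructor
    · intro b hb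
      rcases lt_or_ge b 0 with hb0 | hb0
      · exact Filter.Eventually.of_forall fun k => lt_of_lt_of_le hb0 (hf_nonneg k)
      · -- interior of Δ is nonempty
        have hVpos : 0 < V := lt_of_le_of_lt hb0 hb
        have hμpos : 0 < volume (okounkovBody Γ) := by
          rcases (zero_le (a := volume (okounkovBody Γ))).lt_or_eq with h | h
          · exact h
          · exfalso
            rw [hV, ← h] at hVpos
            simp at hVpos
        have hint : (interior (okounkovBody Γ)).Nonempty := by
          by_contra h
          rw [Set.not_nonempty_iff_eq_empty] at h
          have := measure_ok_le_interior Γ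
          rw [h] at this
          simp only [measure_empty, nonpos_iff_eq_zero] at this
          exact absurd this hμpos.ne'
        have hsup := measure_ok_le_iSup hadd hC hN01 (hN0 N0 le_rfl) hint
        have hbΔ : ENNReal.ofReal b < volume (okounkovBody Γ) := by
          rw [ENNReal.ofReal_lt_iff_lt_toReal hb0 hΔfin]
          exact hb
        obtain ⟨n₀, hn₀⟩ := lt_iSup_iff.mp (lt_of_lt_of_le hbΔ hsup)
        set k₀ : ℕ := Nat.factorial (n₀ + 1) with hk₀
        have hk₀1 : 1 ≤ k₀ := Nat.factorial_pos _
        have hk₀0 : (0 : ℝ) < (k₀ : ℝ) := by exact_mod_cast hk₀1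
        have hDmfin : volume (Dm Γ k₀) ≠ ⊤ :=
          (lt_of_le_of_lt (measure_mono (Dm_subset_ok hk₀1)) hΔfin.lt_top).ne
        have hfk₀ : b < f k₀ := by
          have h2 : (volume (Dm Γ k₀)).toReal = f k₀ := by
            show (volume ((k₀ : ℝ)⁻¹ • convexHull ℝ (rPt '' gradedPiece Γ k₀))).toReal = _
            rw [vol_smul _ (by positivity), ENNReal.toReal_mul,
              ENNReal.toReal_ofReal (by positivity), inv_pow]
          have h3 : b < (volume (Dm Γ k₀)).toReal := by
            rw [← ENNReal.ofReal_lt_iff_lt_toReal hb0 hDmfin]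
            exact hn₀
          rwa [h2] at h3
        set cpar : ℝ := (N0 : ℝ) + (k₀ : ℝ) with hcpar
        have hg : Tendsto (fun k : ℕ => (1 - cpar / k) ^ d * f k₀) atTop (nhds (f k₀)) := by
          have hq1 : Tendsto (fun k : ℕ => cpar / k) atTop (nhds 0) :=
            tendsto_const_div_atTop_nhds_zero_nat cpar
          have hq2 : Tendsto (fun k : ℕ => 1 - cpar / k) atTop (nhds 1) := by
            have := (tendsto_const_nhds (x := (1 : ℝ)) (f := atTop)).sub hq1
            simpa using this
          have hq3 := hq2.pow d
          rw [one_pow] at hq3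
          have hq4 := hq3.mul_const (f k₀)
          rwa [one_mul] at hq4
        have hev1 : ∀ᶠ k : ℕ in atTop, b < (1 - cpar / k) ^ d * f k₀ :=
          hg.eventually (eventually_gt_nhds hfk₀)
        have hev2 : ∀ᶠ k : ℕ in atTop, (1 - cpar / k) ^ d * f k₀ ≤ f k := by
          filter_upwards [eventually_ge_atTop (N0 + k₀)] with k hkge
          have hk1 : 1 ≤ k := le_trans (by omega) hkge
          have hkpos : (0 : ℝ) < (k : ℝ) := by exact_mod_cast hk1
          obtain ⟨a, rr, hak, hrr1, hrr2, ha1⟩ :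
              ∃ a rr : ℕ, a * k₀ + rr = k ∧ N0 ≤ rr ∧ rr < N0 + k₀ ∧ 1 ≤ a := by
            have hsub : N0 ≤ k := by omega
            have hmod : (k - N0) % k₀ < k₀ := Nat.mod_lt _ (by omega)
            have hdiv : 1 ≤ (k - N0) / k₀ := by
              rw [Nat.one_le_div_iff (by omega)]
              omega
            refine ⟨(k - N0) / k₀, N0 + (k - N0) % k₀, ?_, by omega, by omega, hdiv⟩
            have h := Nat.div_add_mod (k - N0) k₀
            calc (k - N0) / k₀ * k₀ + (N0 + (k - N0) % k₀)
                = (k₀ * ((k - N0) / k₀) + (k - N0) % k₀) + N0 := by ring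
              _ = (k - N0) + N0 := by rw [h]
              _ = k := by omega
          obtain ⟨βr, hβr⟩ := hN0 rr hrr1
          have hincl : (rPt βr) +ᵥ ((a : ℝ) • convexHull ℝ (rPt '' gradedPiece Γ k₀)) ⊆
              convexHull ℝ (rPt '' gradedPiece Γ k) := by
            rintro _ ⟨y, hy, rfl⟩
            have h1' : y ∈ convexHull ℝ (rPt '' gradedPiece Γ (a * k₀)) :=
              smul_conv_subset hadd k₀ a ha1 hy
            have h2' : rPt βr ∈ convexHull ℝ (rPt '' gradedPiece Γ rr) :=
              subset_convexHull ℝ _ ⟨βr, hβr, rfl⟩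
            have h3' := convAdd hadd (a * k₀) rr (Set.add_mem_add h1' h2')
            rw [hak] at h3'
            show rPt βr +ᵥ y ∈ _
            have he : rPt βr +ᵥ y = y + rPt βr := by rw [vadd_eq_add, add_comm]
            rwa [he]
          have hmeas : ENNReal.ofReal ((a : ℝ) ^ d) *
              volume (convexHull ℝ (rPt '' gradedPiece Γ k₀)) ≤
              volume (convexHull ℝ (rPt '' gradedPiece Γ k)) := by
            calc ENNReal.ofReal ((a : ℝ) ^ d) * volume (convexHull ℝ (rPt '' gradedPiece Γ k₀))
                = volume ((a : ℝ) • convexHull ℝ (rPt '' gradedPiece Γ k₀)) :=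
                  (vol_smul _ (by positivity) _).symm
              _ = volume ((rPt βr) +ᵥ ((a : ℝ) • convexHull ℝ (rPt '' gradedPiece Γ k₀))) :=
                  (measure_vadd volume _ _).symm
              _ ≤ _ := measure_mono hincl
          have hw : (a : ℝ) ^ d * (volume (convexHull ℝ (rPt '' gradedPiece Γ k₀))).toReal ≤
              (volume (convexHull ℝ (rPt '' gradedPiece Γ k))).toReal := by
            have h7 := ENNReal.toReal_mono (hconvfin k hk1) hmeas
            rwa [ENNReal.toReal_mul, ENNReal.toReal_ofReal (by positivity)] at h7
          have hak' : (a : ℝ) * (k₀ : ℝ) = (k : ℝ) - (rr : ℝ) := by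
            have hcast := congrArg (Nat.cast : ℕ → ℝ) hak
            push_cast at hcast
            linarith
          have hrrle : (rr : ℝ) ≤ cpar := by
            rw [hcpar]
            have h' : (rr : ℕ) ≤ N0 + k₀ := le_of_lt hrr2
            exact_mod_cast h'
          have hcge : cpar ≤ (k : ℝ) := by
            rw [hcpar]
            exact_mod_cast hkge
          have h8 : 0 ≤ 1 - cpar / (k : ℝ) := by
            rw [sub_nonneg, div_le_one hkpos]
            exact hcge
          have h9 : 1 - cpar / (k : ℝ) ≤ ((a : ℝ) * (k₀ : ℝ)) / (k : ℝ) := by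
            rw [hak', one_sub_div hkpos.ne']
            gcongr
          have hwk₀ : ((k₀ : ℝ) ^ d) * f k₀ =
              (volume (convexHull ℝ (rPt '' gradedPiece Γ k₀))).toReal := by
            rw [hf]
            have hne0 : ((k₀ : ℝ) ^ d) ≠ 0 := by positivity
            field_simp
          calc (1 - cpar / (k : ℝ)) ^ d * f k₀
              ≤ (((a : ℝ) * (k₀ : ℝ)) / (k : ℝ)) ^ d * f k₀ :=
                mul_le_mul_of_nonneg_right (pow_le_pow_left₀ h8 h9 d) (hf_nonneg k₀)
            _ = ((k : ℝ) ^ d)⁻¹ * ((a : ℝ) ^ d * (((k₀ : ℝ) ^ d) * f k₀)) := by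
                rw [div_pow, mul_pow]
                ring
            _ = ((k : ℝ) ^ d)⁻¹ *
                ((a : ℝ) ^ d * (volume (convexHull ℝ (rPt '' gradedPiece Γ k₀))).toReal) := by
                rw [hwk₀]
            _ ≤ ((k : ℝ) ^ d)⁻¹ * (volume (convexHull ℝ (rPt '' gradedPiece Γ k))).toReal :=
                mul_le_mul_of_nonneg_left hw (by positivity)
            _ = f k := rfl
        filter_upwards [hev1, hev2] with k hA hB
        exact lt_of_lt_of_le hA hB
    · intro b hb
      filter_upwards [eventually_ge_atTop 1] with k hk
      exact lt_of_le_of_lt (hf_le k hk) hb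
  -- squeeze
  have hFle : ∀ᶠ k : ℕ in atTop,
      ((k : ℝ) ^ d)⁻¹ * (volume (okounkovBody (Γk k))).toReal ≤ V := by
    filter_upwards [eventually_ge_atTop (max N0 1)] with k hk
    have hk1 : 1 ≤ k := le_trans (le_max_right _ _) hk
    have hkN0 : N0 ≤ k := le_trans (le_max_left _ _) hk
    have hsub := ok_Gk_subset hk1 hC (hsemi k hk1) (h1 k hk1)
      (fun r' hr1 α h => hr k hk1 r' hr1 α h) (hN0 k hkN0)
    have hmeas : volume (okounkovBody (Γk k)) ≤
        ENNReal.ofReal ((k : ℝ) ^ d) * volume (okounkovBody Γ) := by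
      rw [← hvolsmul k]
      exact measure_mono hsub
    have h4 := ENNReal.toReal_mono (hprodfin k) hmeas
    rw [ENNReal.toReal_mul, ENNReal.toReal_ofReal (by positivity)] at h4
    calc ((k : ℝ) ^ d)⁻¹ * (volume (okounkovBody (Γk k))).toReal
        ≤ ((k : ℝ) ^ d)⁻¹ * (((k : ℝ) ^ d) * V) :=
          mul_le_mul_of_nonneg_left h4 (by positivity)
      _ = V := by
          have : ((k : ℝ) ^ d) ≠ 0 := by positivity
          field_simp
  have hfleF : ∀ᶠ k : ℕ in atTop,
      f k ≤ ((k : ℝ) ^ d)⁻¹ * (volume (okounkovBody (Γk k))).toReal := by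
    filter_upwards [eventually_ge_atTop (max N0 1)] with k hk
    have hk1 : 1 ≤ k := le_trans (le_max_right _ _) hk
    have hkN0 : N0 ≤ k := le_trans (le_max_left _ _) hk
    have hsub := ok_Gk_subset hk1 hC (hsemi k hk1) (h1 k hk1)
      (fun r' hr1 α h => hr k hk1 r' hr1 α h) (hN0 k hkN0)
    have hokfin : volume (okounkovBody (Γk k)) ≠ ⊤ := by
      refine ne_top_of_le_ne_top (hprodfin k) ?_
      rw [← hvolsmul k]
      exact measure_mono hsub
    have h5 : volume (convexHull ℝ (rPt '' gradedPiece Γ k)) ≤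
        volume (okounkovBody (Γk k)) :=
      measure_mono (conv_subset_ok_Gk (h1 k hk1))
    have h6 := ENNReal.toReal_mono hokfin h5
    exact mul_le_mul_of_nonneg_left h6 (by positivity)
  exact tendsto_of_tendsto_of_tendsto_of_le_of_le' hf_tendsto tendsto_const_nhds hfleF hFle
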